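/- arXiv:2007.01822 — 2 statements merged into one kernel-verified Lean document; each statement's English description precedes it below -/
import Mathlib

section
/- Product inequality for weak limits of monotone functions: let P, G : [0,∞) → ℝ be continuous nondecreasing, ρ_n ∈ L¹(O;[0,∞)) with P(ρ_n) ⇀ P̄, G(ρ_n) ⇀ Ḡ, and P(ρ_n)G(ρ_n) ⇀ PG̅ weakly in L¹(O). Then P̄·Ḡ ≤ PG̅ almost everywhere in O. -/
open MeasureTheory Filter
open scoped ENNReal Topology

private lemma aux_indic {α : Type*} [MeasurableSpace α] (μ : Measure α) {S : Set α}
    (hS : MeasurableSet S) (f : α → ℝ) :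
    ∫ x, f x * S.indicator (fun _ => (1:ℝ)) x ∂μ = ∫ x in S, f x ∂μ := by
  have h : (fun x => f x * S.indicator (fun _ => (1:ℝ)) x) = S.indicator f := by
    funext x
    by_cases hx : x ∈ S <;> simp [hx]
  rw [h, integral_indicator hS]

private lemma aux_key {α : Type*} [MeasurableSpace α] {μ : Measure α} [SigmaFinite μ]
    {F : ℕ → α → ℝ} {f : α → ℝ}
    (hfi : ∀ s, MeasurableSet s → μ s < ∞ → IntegrableOn f s μ)
    (hFnn : ∀ n x, 0 ≤ F n x)
    (hconv : ∀ s, MeasurableSet s → μ s < ∞ →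
      Tendsto (fun n => ∫ x in s, F n x ∂μ) atTop (𝓝 (∫ x in s, f x ∂μ))) :
    0 ≤ᵐ[μ] f := by
  refine ae_nonneg_of_forall_setIntegral_nonneg_of_sigmaFinite hfi fun s hs hμs => ?_
  exact ge_of_tendsto' (hconv s hs hμs) fun n => integral_nonneg fun x => hFnn n x

private lemma aux_lin {α : Type*} [MeasurableSpace α] {μ : Measure α} {s : Set α}
    (hμs : μ s < ∞) {A : α → ℝ} (hA : IntegrableOn A s μ) (a c : ℝ) :
    ∫ x in s, (a * A x + c) ∂μ = a * (∫ x in s, A x ∂μ) + c * (μ s).toReal := by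
  have hc : Integrable (fun _ => c) (μ.restrict s) := integrableOn_const hμs.ne
  have h1 : Integrable (fun x => a * A x) (μ.restrict s) := hA.const_mul a
  rw [integral_add h1 hc, integral_const_mul, setIntegral_const, smul_eq_mul, Measure.real]
  ring

private lemma aux_expand {α : Type*} [MeasurableSpace α] {μ : Measure α} {s : Set α}
    (hμs : μ s < ∞) {A B C : α → ℝ}
    (hA : IntegrableOn A s μ) (hB : IntegrableOn B s μ) (hC : IntegrableOn C s μ)
    (c b1 b2 : ℝ) :
    ∫ x in s, (A x + c - B x * b1 - b2 * C x) ∂μ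
      = (∫ x in s, A x ∂μ) + c * (μ s).toReal
        - (∫ x in s, B x ∂μ) * b1 - b2 * (∫ x in s, C x ∂μ) := by
  have hc : Integrable (fun _ => c) (μ.restrict s) := integrableOn_const hμs.ne
  have hBb : Integrable (fun x => B x * b1) (μ.restrict s) := hB.mul_const b1
  have hCb : Integrable (fun x => b2 * C x) (μ.restrict s) := hC.const_mul b2
  have hAc : Integrable (fun x => A x + c) (μ.restrict s) := hA.add hc
  have hL : Integrable (fun x => A x + c - B x * b1) (μ.restrict s) := hAc.sub hBb
  rw [integral_sub hL hCb, integral_sub hAc hBb, integral_add hA hc,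
    integral_mul_const, integral_const_mul, setIntegral_const, smul_eq_mul, Measure.real]
  ring

private lemma aux_pointwise (P G : ℝ → ℝ)
    (hPc : ContinuousOn P (Set.Ici 0)) (hGc : ContinuousOn G (Set.Ici 0))
    (hPm : MonotoneOn P (Set.Ici 0)) (hGm : MonotoneOn G (Set.Ici 0))
    (p g pg : ℝ)
    (h1 : ∀ q : ℚ, 0 ≤ (q:ℝ) → 0 ≤ pg + P q * G q - p * G q - P q * g)
    (hp0 : P 0 ≤ p) (hg0 : G 0 ≤ g)
    (hpsup : BddAbove (P '' Set.Ici 0) → p ≤ sSup (P '' Set.Ici 0))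
    (hgsup : BddAbove (G '' Set.Ici 0) → g ≤ sSup (G '' Set.Ici 0)) :
    p * g ≤ pg := by
  -- extend h1 to all real b ≥ 0 by continuity
  have h1' : ∀ b : ℝ, 0 ≤ b → 0 ≤ pg + P b * G b - p * G b - P b * g := by
    intro b hb
    have hex : ∀ n : ℕ, ∃ q : ℚ, b < (q:ℝ) ∧ (q:ℝ) < b + 1/(n+1) := by
      intro n
      have h0 : (0:ℝ) < 1/(n+1) := by positivity
      exact exists_rat_btwn (by linarith)
    choose q hq1 hq2 using hex
    have hub : Tendsto (fun n : ℕ => b + 1/((n:ℝ)+1)) atTop (𝓝 (b + 0)) :=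
      tendsto_const_nhds.add tendsto_one_div_add_atTop_nhds_zero_nat
    rw [add_zero] at hub
    have hqb : Tendsto (fun n => ((q n : ℝ))) atTop (𝓝 b) :=
      tendsto_of_tendsto_of_tendsto_of_le_of_le tendsto_const_nhds hub
        (fun n => (hq1 n).le) (fun n => (hq2 n).le)
    have hqmem : ∀ n, (q n : ℝ) ∈ Set.Ici (0:ℝ) := fun n => le_trans hb (hq1 n).le
    have hqw : Tendsto (fun n => ((q n : ℝ))) atTop (𝓝[Set.Ici 0] b) :=
      tendsto_nhdsWithin_iff.mpr ⟨hqb, Eventually.of_forall hqmem⟩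
    have hPt : Tendsto (fun n => P ((q n : ℝ))) atTop (𝓝 (P b)) :=
      (hPc b hb).tendsto.comp hqw
    have hGt : Tendsto (fun n => G ((q n : ℝ))) atTop (𝓝 (G b)) :=
      (hGc b hb).tendsto.comp hqw
    have hT : Tendsto (fun n => pg + P ((q n : ℝ)) * G ((q n : ℝ)) - p * G ((q n : ℝ))
        - P ((q n : ℝ)) * g) atTop (𝓝 (pg + P b * G b - p * G b - P b * g)) :=
      ((tendsto_const_nhds.add (hPt.mul hGt)).sub (hGt.const_mul p)).sub (hPt.mul_const g)
    exact ge_of_tendsto' hT fun n => h1 (q n) (hqmem n)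
  by_cases hPb : ∃ b : ℝ, 0 ≤ b ∧ P b = p
  · obtain ⟨b, hb, hPbe⟩ := hPb
    have := h1' b hb
    rw [hPbe] at this
    nlinarith
  by_cases hGb : ∃ b : ℝ, 0 ≤ b ∧ G b = g
  · obtain ⟨b, hb, hGbe⟩ := hGb
    have := h1' b hb
    rw [hGbe] at this
    nlinarith
  push_neg at hPb hGb
  have hPlt : ∀ b : ℝ, 0 ≤ b → P b < p := by
    intro b hb
    rcases lt_or_ge (P b) p with h | h
    · exact h
    exfalso
    have hsub : ContinuousOn P (Set.Icc 0 b) := hPc.mono Set.Icc_subset_Ici_self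
    obtain ⟨c, hc, hcp⟩ := intermediate_value_Icc hb hsub ⟨hp0, h⟩
    exact hPb c hc.1 hcp
  have hGlt : ∀ b : ℝ, 0 ≤ b → G b < g := by
    intro b hb
    rcases lt_or_ge (G b) g with h | h
    · exact h
    exfalso
    have hsub : ContinuousOn G (Set.Icc 0 b) := hGc.mono Set.Icc_subset_Ici_self
    obtain ⟨c, hc, hcp⟩ := intermediate_value_Icc hb hsub ⟨hg0, h⟩
    exact hGb c hc.1 hcp
  have hPbdd : BddAbove (P '' Set.Ici 0) := by
    refine ⟨p, ?_⟩
    rintro _ ⟨b, hb, rfl⟩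
    exact (hPlt b hb).le
  have hGbdd : BddAbove (G '' Set.Ici 0) := by
    refine ⟨g, ?_⟩
    rintro _ ⟨b, hb, rfl⟩
    exact (hGlt b hb).le
  have hPne : (P '' Set.Ici 0).Nonempty := ⟨P 0, 0, Set.self_mem_Ici, rfl⟩
  have hGne : (G '' Set.Ici 0).Nonempty := ⟨G 0, 0, Set.self_mem_Ici, rfl⟩
  have hpe : sSup (P '' Set.Ici 0) = p := by
    refine le_antisymm (csSup_le hPne ?_) (hpsup hPbdd)
    rintro _ ⟨b, hb, rfl⟩
    exact (hPlt b hb).le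
  have hge : sSup (G '' Set.Ici 0) = g := by
    refine le_antisymm (csSup_le hGne ?_) (hgsup hGbdd)
    rintro _ ⟨b, hb, rfl⟩
    exact (hGlt b hb).le
  refine le_of_forall_pos_le_add ?_
  intro ε hε
  set t := min 1 ε with ht_def
  have ht : 0 < t := lt_min one_pos hε
  obtain ⟨_, ⟨b1, hb1, rfl⟩, hy1⟩ :=
    exists_lt_of_lt_csSup hPne (show p - t < sSup (P '' Set.Ici 0) by rw [hpe]; linarith)
  obtain ⟨_, ⟨b2, hb2, rfl⟩, hy2⟩ :=
    exists_lt_of_lt_csSup hGne (show g - t < sSup (G '' Set.Ici 0) by rw [hge]; linarith)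
  set b := max b1 b2 with hb_def
  have hb : (0:ℝ) ≤ b := le_trans hb1 (le_max_left _ _)
  have hPb1 : P b1 ≤ P b := hPm hb1 hb (le_max_left _ _)
  have hGb2 : G b2 ≤ G b := hGm hb2 hb (le_max_right _ _)
  have e1 : p - P b < t := by linarith
  have e2 : g - G b < t := by linarith
  have hnn2 : 0 ≤ g - G b := by linarith [hGlt b hb]
  have hprod : (p - P b) * (g - G b) ≤ t * t := mul_le_mul e1.le e2.le hnn2 ht.le
  have htt : t * t ≤ ε := by
    have h1t : t ≤ 1 := min_le_left _ _
    have h2t : t ≤ ε := min_le_right _ _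
    nlinarith
  have h2 := h1' b hb
  nlinarith

/-- Product inequality for weak limits of monotone functions: let
`P, G : [0,∞) → ℝ` be continuous nondecreasing, `ρ_n ∈ L¹(O;[0,∞))` with
`P(ρ_n) ⇀ P̄`, `G(ρ_n) ⇀ Ḡ` and `P(ρ_n)G(ρ_n) ⇀ PG̅` weakly in `L¹(O)`.
Then `P̄·Ḡ ≤ PG̅` a.e. in `O`. -/
theorem stmt_16 (d : ℕ) (O : Set (EuclideanSpace ℝ (Fin d)))
    (hOopen : IsOpen O) (hOne : O.Nonempty)
    (P G : ℝ → ℝ)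
    (hPc : ContinuousOn P (Set.Ici 0)) (hGc : ContinuousOn G (Set.Ici 0))
    (hPm : MonotoneOn P (Set.Ici 0)) (hGm : MonotoneOn G (Set.Ici 0))
    (ρ : ℕ → EuclideanSpace ℝ (Fin d) → ℝ)
    (hρ0 : ∀ n x, 0 ≤ ρ n x) (hρint : ∀ n, IntegrableOn (ρ n) O)
    (hPint : ∀ n, IntegrableOn (fun x => P (ρ n x)) O)
    (hGint : ∀ n, IntegrableOn (fun x => G (ρ n x)) O)
    (hPGint : ∀ n, IntegrableOn (fun x => P (ρ n x) * G (ρ n x)) O)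
    (Pbar Gbar PGbar : EuclideanSpace ℝ (Fin d) → ℝ)
    (hPbar : IntegrableOn Pbar O) (hGbar : IntegrableOn Gbar O)
    (hPGbar : IntegrableOn PGbar O)
    (hweakP : ∀ φ : EuclideanSpace ℝ (Fin d) → ℝ,
      Measurable φ → (∃ C : ℝ, ∀ x, |φ x| ≤ C) →
      Tendsto (fun n => ∫ x in O, P (ρ n x) * φ x) atTop (𝓝 (∫ x in O, Pbar x * φ x)))
    (hweakG : ∀ φ : EuclideanSpace ℝ (Fin d) → ℝ,
      Measurable φ → (∃ C : ℝ, ∀ x, |φ x| ≤ C) →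
      Tendsto (fun n => ∫ x in O, G (ρ n x) * φ x) atTop (𝓝 (∫ x in O, Gbar x * φ x)))
    (hweakPG : ∀ φ : EuclideanSpace ℝ (Fin d) → ℝ,
      Measurable φ → (∃ C : ℝ, ∀ x, |φ x| ≤ C) →
      Tendsto (fun n => ∫ x in O, P (ρ n x) * G (ρ n x) * φ x) atTop
        (𝓝 (∫ x in O, PGbar x * φ x))) :
    ∀ᵐ x ∂(volume.restrict O), Pbar x * Gbar x ≤ PGbar x := by
  have hindb : ∀ (S : Set (EuclideanSpace ℝ (Fin d))), ∀ x, |S.indicator (fun _ => (1:ℝ)) x| ≤ 1 := by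
    intro S x
    by_cases hx : x ∈ S <;> simp [hx]
  -- setwise convergence from weak convergence, via indicator test functions
  have hPS : ∀ S : Set (EuclideanSpace ℝ (Fin d)), MeasurableSet S →
      Tendsto (fun n => ∫ x in S, P (ρ n x) ∂(volume.restrict O)) atTop (𝓝 (∫ x in S, Pbar x ∂(volume.restrict O))) := by
    intro S hS
    have h := hweakP (S.indicator fun _ => 1) (measurable_const.indicator hS) ⟨1, hindb S⟩
    have e : (fun n => ∫ x in O, P (ρ n x) * S.indicator (fun _ => (1:ℝ)) x)
        = fun n => ∫ x in S, P (ρ n x) ∂(volume.restrict O) :=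
      funext fun n => aux_indic (volume.restrict O) hS fun x => P (ρ n x)
    rw [e, aux_indic (volume.restrict O) hS Pbar] at h
    exact h
  have hGS : ∀ S : Set (EuclideanSpace ℝ (Fin d)), MeasurableSet S →
      Tendsto (fun n => ∫ x in S, G (ρ n x) ∂(volume.restrict O)) atTop (𝓝 (∫ x in S, Gbar x ∂(volume.restrict O))) := by
    intro S hS
    have h := hweakG (S.indicator fun _ => 1) (measurable_const.indicator hS) ⟨1, hindb S⟩
    have e : (fun n => ∫ x in O, G (ρ n x) * S.indicator (fun _ => (1:ℝ)) x)
        = fun n => ∫ x in S, G (ρ n x) ∂(volume.restrict O) :=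
      funext fun n => aux_indic (volume.restrict O) hS fun x => G (ρ n x)
    rw [e, aux_indic (volume.restrict O) hS Gbar] at h
    exact h
  have hPGS : ∀ S : Set (EuclideanSpace ℝ (Fin d)), MeasurableSet S →
      Tendsto (fun n => ∫ x in S, P (ρ n x) * G (ρ n x) ∂(volume.restrict O)) atTop
        (𝓝 (∫ x in S, PGbar x ∂(volume.restrict O))) := by
    intro S hS
    have h := hweakPG (S.indicator fun _ => 1) (measurable_const.indicator hS) ⟨1, hindb S⟩
    have e : (fun n => ∫ x in O, P (ρ n x) * G (ρ n x) * S.indicator (fun _ => (1:ℝ)) x)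
        = fun n => ∫ x in S, P (ρ n x) * G (ρ n x) ∂(volume.restrict O) :=
      funext fun n => aux_indic (volume.restrict O) hS fun x => P (ρ n x) * G (ρ n x)
    rw [e, aux_indic (volume.restrict O) hS PGbar] at h
    exact h
  -- master lemma for linear combinations
  have master : ∀ (Fn : ℕ → EuclideanSpace ℝ (Fin d) → ℝ) (fb : EuclideanSpace ℝ (Fin d) → ℝ) (a c : ℝ),
      (∀ n, IntegrableOn (Fn n) O) → IntegrableOn fb O →
      (∀ S : Set (EuclideanSpace ℝ (Fin d)), MeasurableSet S →
        Tendsto (fun n => ∫ x in S, Fn n x ∂(volume.restrict O)) atTop (𝓝 (∫ x in S, fb x ∂(volume.restrict O)))) →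
      (∀ n x, 0 ≤ a * Fn n x + c) →
      (0:EuclideanSpace ℝ (Fin d) → ℝ) ≤ᵐ[volume.restrict O] fun x => a * fb x + c := by
    intro Fn fb a c hFi hfbi hconv hnn
    refine aux_key (F := fun n x => a * Fn n x + c) ?_ hnn ?_
    · intro s hs hμs
      exact ((Integrable.restrict hfbi).const_mul a).add (integrableOn_const hμs.ne)
    · intro s hs hμs
      have hT : Tendsto (fun n => a * (∫ x in s, Fn n x ∂(volume.restrict O)) + c * ((volume.restrict O) s).toReal) atTop
          (𝓝 (a * (∫ x in s, fb x ∂(volume.restrict O)) + c * ((volume.restrict O) s).toReal)) :=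
        ((hconv s hs).const_mul a).add tendsto_const_nhds
      rw [aux_lin hμs (Integrable.restrict hfbi) a c]
      exact hT.congr fun n => (aux_lin hμs (Integrable.restrict (hFi n)) a c).symm
  -- a.e. lower bounds
  have hP0ae : (0:EuclideanSpace ℝ (Fin d) → ℝ) ≤ᵐ[volume.restrict O] fun x => 1 * Pbar x + (-(P 0)) := by
    refine master (fun n x => P (ρ n x)) Pbar 1 (-(P 0)) hPint hPbar hPS ?_
    intro n x
    have := hPm (Set.self_mem_Ici) (hρ0 n x) (hρ0 n x)
    linarith
  have hG0ae : (0:EuclideanSpace ℝ (Fin d) → ℝ) ≤ᵐ[volume.restrict O] fun x => 1 * Gbar x + (-(G 0)) := by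
    refine master (fun n x => G (ρ n x)) Gbar 1 (-(G 0)) hGint hGbar hGS ?_
    intro n x
    have := hGm (Set.self_mem_Ici) (hρ0 n x) (hρ0 n x)
    linarith
  -- a.e. upper bounds (conditional on boundedness)
  have hPsupae : ∀ᵐ x ∂(volume.restrict O), BddAbove (P '' Set.Ici 0) → Pbar x ≤ sSup (P '' Set.Ici 0) := by
    by_cases hB : BddAbove (P '' Set.Ici 0)
    · have h := master (fun n x => P (ρ n x)) Pbar (-1) (sSup (P '' Set.Ici 0))
        hPint hPbar hPS (fun n x => by
          have := le_csSup hB (Set.mem_image_of_mem P (hρ0 n x))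
          linarith)
      filter_upwards [h] with x hx _
      have := hx
      simp only [Pi.zero_apply] at this
      linarith
    · exact Eventually.of_forall fun x hc => absurd hc hB
  have hGsupae : ∀ᵐ x ∂(volume.restrict O), BddAbove (G '' Set.Ici 0) → Gbar x ≤ sSup (G '' Set.Ici 0) := by
    by_cases hB : BddAbove (G '' Set.Ici 0)
    · have h := master (fun n x => G (ρ n x)) Gbar (-1) (sSup (G '' Set.Ici 0))
        hGint hGbar hGS (fun n x => by
          have := le_csSup hB (Set.mem_image_of_mem G (hρ0 n x))
          linarith)
      filter_upwards [h] with x hx _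
      have := hx
      simp only [Pi.zero_apply] at this
      linarith
    · exact Eventually.of_forall fun x hc => absurd hc hB
  -- a.e. product inequality against constants, for each fixed b ≥ 0
  have hq : ∀ b : ℝ, 0 ≤ b →
      (0:EuclideanSpace ℝ (Fin d) → ℝ) ≤ᵐ[volume.restrict O] fun x => PGbar x + P b * G b - Pbar x * G b - P b * Gbar x := by
    intro b hb
    refine aux_key
      (F := fun n x => P (ρ n x) * G (ρ n x) + P b * G b - P (ρ n x) * G b - P b * G (ρ n x))
      ?_ ?_ ?_
    · intro s hs hμs
      exact (((Integrable.restrict hPGbar).add (integrableOn_const hμs.ne)).sub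
        ((Integrable.restrict hPbar).mul_const _)).sub ((Integrable.restrict hGbar).const_mul _)
    · intro n x
      show 0 ≤ P (ρ n x) * G (ρ n x) + P b * G b - P (ρ n x) * G b - P b * G (ρ n x)
      rcases le_total (ρ n x) b with h | h
      · have h1 := hPm (hρ0 n x) hb h
        have h2 := hGm (hρ0 n x) hb h
        nlinarith
      · have h1 := hPm hb (hρ0 n x) h
        have h2 := hGm hb (hρ0 n x) h
        nlinarith
    · intro s hs hμs
      have hT : Tendsto (fun n => (∫ x in s, P (ρ n x) * G (ρ n x) ∂(volume.restrict O))
            + (P b * G b) * ((volume.restrict O) s).toReal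
            - (∫ x in s, P (ρ n x) ∂(volume.restrict O)) * G b - P b * (∫ x in s, G (ρ n x) ∂(volume.restrict O))) atTop
          (𝓝 ((∫ x in s, PGbar x ∂(volume.restrict O)) + (P b * G b) * ((volume.restrict O) s).toReal
            - (∫ x in s, Pbar x ∂(volume.restrict O)) * G b - P b * (∫ x in s, Gbar x ∂(volume.restrict O)))) :=
        (((hPGS s hs).add tendsto_const_nhds).sub ((hPS s hs).mul_const (G b))).sub
          ((hGS s hs).const_mul (P b))
      rw [aux_expand hμs (Integrable.restrict hPGbar) (Integrable.restrict hPbar) (Integrable.restrict hGbar) (P b * G b) (G b) (P b)]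
      exact hT.congr fun n =>
        (aux_expand hμs (Integrable.restrict (hPGint n)) (Integrable.restrict (hPint n)) (Integrable.restrict (hGint n))
          (P b * G b) (G b) (P b)).symm
  have hQae : ∀ᵐ x ∂(volume.restrict O), ∀ q : ℚ, 0 ≤ (q:ℝ) →
      0 ≤ PGbar x + P q * G q - Pbar x * G q - P q * Gbar x := by
    rw [ae_all_iff]
    intro q
    by_cases hq0 : 0 ≤ (q:ℝ)
    · filter_upwards [hq (q:ℝ) hq0] with x hx _
      simpa using hx
    · exact Eventually.of_forall fun x h => absurd h hq0
  filter_upwards [hQae, hP0ae, hG0ae, hPsupae, hGsupae] with x h1 h2 h3 h4 h5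
  simp only [Pi.zero_apply] at h2 h3
  exact aux_pointwise P G hPc hGc hPm hGm (Pbar x) (Gbar x) (PGbar x) h1
    (by linarith) (by linarith) h4 h5
end

section
/- Stationarity of the extended boundary density along the flow: let X be the flow of −u_B and define r_B along trajectories by r_B(X(s,x_B)) = r_B(x_B) exp(∫₀^s div u_B(X(z;x_B)) dz). Then the extended field satisfies div(r_B u_B) = 0 on the region swept by the trajectories {X(s,x_B) : s ∈ (0,δ), x_B ∈ Γ}, where this parametrization is a diffeomorphism. -/
open MeasureTheory
open scoped Topology

/-- Stationarity of the extended boundary density along the flow: let `X` be the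
flow of `−u_B` and define `r_B` along trajectories emanating from a flat inflow
boundary piece `Γ = G(O)` (with `u_B·n < 0` on `Γ`) by
`r_B(X(s,x_B)) = r_B(x_B) exp(∫₀^s div u_B(X(z;x_B)) dz)`.  Then the extended field
satisfies `div(r_B u_B) = 0` on the region `V` swept by the trajectories
`{X(s, G(ζ)) : s ∈ (0,δ), ζ ∈ O}`, this parametrization being a diffeomorphism
(injective, with open image, and the extended density differentiable there). -/
theorem stmt_18 (uB : (Fin 3 → ℝ) → (Fin 3 → ℝ)) (huB : ContDiff ℝ 2 uB)
    (X : ℝ → (Fin 3 → ℝ) → (Fin 3 → ℝ))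
    (hX0 : ∀ x, X 0 x = x)
    (hXode : ∀ s x, HasDerivAt (fun t => X t x) (-uB (X s x)) s)
    (G : (Fin 2 → ℝ) →ᵃ[ℝ] (Fin 3 → ℝ)) (O : Set (Fin 2 → ℝ)) (δ : ℝ) (hδ : 0 < δ)
    (n : Fin 3 → ℝ)
    (hGn : ∀ w : Fin 2 → ℝ, ∑ i, G.linear w i * n i = 0)
    (hin : ∀ ζ ∈ O, ∑ i, uB (G ζ) i * n i < 0)
    (rB : (Fin 3 → ℝ) → ℝ)
    (hrBC1 : ContDiffOn ℝ 1 rB (Set.range G))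
    (hrB : ∀ s ∈ Set.Ioo (0:ℝ) δ, ∀ ζ ∈ O,
      rB (X s (G ζ)) = rB (G ζ) * Real.exp (∫ z in (0:ℝ)..s,
        ∑ i, fderiv ℝ uB (X z (G ζ)) (Pi.single i 1) i))
    (V : Set (Fin 3 → ℝ))
    (hV : V = (fun p : ℝ × (Fin 2 → ℝ) => X p.1 (G p.2)) '' (Set.Ioo (0:ℝ) δ ×ˢ O))
    (hinj : Set.InjOn (fun p : ℝ × (Fin 2 → ℝ) => X p.1 (G p.2)) (Set.Ioo (0:ℝ) δ ×ˢ O))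
    (hVopen : IsOpen V)
    (hrBdiff : ∀ x ∈ V, DifferentiableAt ℝ rB x) :
    ∀ x ∈ V, ∑ i, fderiv ℝ (fun y => rB y * uB y i) x (Pi.single i 1) = 0 := by
  rintro x hx
  have hx' := hx
  rw [hV] at hx'
  obtain ⟨⟨s, ζ⟩, ⟨hs, hζ⟩, rfl⟩ := hx'
  set x := X s (G ζ) with hxdef
  -- abbreviations
  set φ : ℝ → ℝ := fun z => ∑ i, fderiv ℝ uB (X z (G ζ)) (Pi.single i 1) i with hφdef
  -- the curve is differentiable, hence continuous
  have hXd : ∀ t, HasDerivAt (fun t => X t (G ζ)) (-uB (X t (G ζ))) t :=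
    fun t => hXode t (G ζ)
  have hXdiff : Differentiable ℝ (fun t => X t (G ζ)) := fun t => (hXd t).differentiableAt
  have hXc : Continuous (fun t => X t (G ζ)) := hXdiff.continuous
  have huBdiff : Differentiable ℝ uB := huB.differentiable two_ne_zero
  -- continuity of the divergence along the curve
  have hφc : Continuous φ := by
    apply continuous_finset_sum
    intro i _
    exact (continuous_apply i).comp
      (((huB.continuous_fderiv two_ne_zero).comp hXc).clm_apply continuous_const)
  -- FTC : derivative of the integral
  have hF : HasDerivAt (fun t => ∫ z in (0:ℝ)..t, φ z) (φ s) s :=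
    intervalIntegral.integral_hasDerivAt_right (hφc.intervalIntegrable 0 s)
      hφc.stronglyMeasurable.stronglyMeasurableAtFilter hφc.continuousAt
  -- derivative of the explicit formula
  have hformula : HasDerivAt
      (fun t => rB (G ζ) * Real.exp (∫ z in (0:ℝ)..t, φ z))
      (rB x * φ s) s := by
    have h1 : HasDerivAt (fun t => Real.exp (∫ z in (0:ℝ)..t, φ z))
        (Real.exp (∫ z in (0:ℝ)..s, φ z) * φ s) s := hF.exp
    have h2 := h1.const_mul (rB (G ζ))
    have : rB (G ζ) * (Real.exp (∫ z in (0:ℝ)..s, φ z) * φ s) = rB x * φ s := by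
      rw [← mul_assoc, ← hrB s hs ζ hζ]
    rwa [this] at h2
  -- the curve composed with rB coincides with the formula near s
  have heq : (fun t => rB (X t (G ζ))) =ᶠ[𝓝 s]
      (fun t => rB (G ζ) * Real.exp (∫ z in (0:ℝ)..t, φ z)) := by
    filter_upwards [isOpen_Ioo.mem_nhds hs] with t ht
    exact hrB t ht ζ hζ
  have hcurve : HasDerivAt (fun t => rB (X t (G ζ))) (rB x * φ s) s :=
    hformula.congr_of_eventuallyEq heq
  -- chain rule for the same curve
  have hL : HasFDerivAt rB (fderiv ℝ rB x) x := (hrBdiff x hx).hasFDerivAt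
  have hchain : HasDerivAt (fun t => rB (X t (G ζ))) (fderiv ℝ rB x (-uB x)) s :=
    hL.comp_hasDerivAt s (hXd s)
  have key : fderiv ℝ rB x (-uB x) = rB x * φ s := hchain.unique hcurve
  have key' : fderiv ℝ rB x (uB x) = -(rB x * φ s) := by
    have := (fderiv ℝ rB x).map_neg (uB x)
    rw [key] at this
    linarith [this]
  -- compute the divergence of rB • uB
  have hterm : ∀ i, fderiv ℝ (fun y => rB y * uB y i) x (Pi.single i 1)
      = rB x * fderiv ℝ uB x (Pi.single i 1) i
        + uB x i * fderiv ℝ rB x (Pi.single i 1) := by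
    intro i
    have hui : HasFDerivAt (fun y => uB y i)
        ((ContinuousLinearMap.proj i).comp (fderiv ℝ uB x)) x := by
      exact
        ((ContinuousLinearMap.proj (R := ℝ) (φ := fun _ : Fin 3 => ℝ) i).hasFDerivAt.comp x
          (huBdiff x).hasFDerivAt)
    have hmul := hL.mul hui
    rw [show (fun y => rB y * uB y i) = (rB * fun y => uB y i) from rfl, hmul.fderiv]
    simp [ContinuousLinearMap.proj]
  have hsum : ∑ i, uB x i * fderiv ℝ rB x (Pi.single i 1) = fderiv ℝ rB x (uB x) := by
    have : uB x = ∑ i, (uB x i) • (Pi.single i 1 : Fin 3 → ℝ) := by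
      ext j
      simp [Finset.sum_apply, Pi.single_apply, mul_ite, Finset.sum_ite_eq']
    conv_rhs => rw [this]
    rw [map_sum]
    refine Finset.sum_congr rfl fun i _ => ?_
    rw [(fderiv ℝ rB x).map_smul, smul_eq_mul]
  calc ∑ i, fderiv ℝ (fun y => rB y * uB y i) x (Pi.single i 1)
      = ∑ i, (rB x * fderiv ℝ uB x (Pi.single i 1) i
          + uB x i * fderiv ℝ rB x (Pi.single i 1)) := by
        exact Finset.sum_congr rfl fun i _ => hterm i
    _ = rB x * φ s + fderiv ℝ rB x (uB x) := by
        rw [Finset.sum_add_distrib, ← Finset.mul_sum, hsum, hφdef]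
    _ = 0 := by rw [key']; ring
end
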